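/- Exponential bound on the rotation speed: for every E ∈ ℝ with −1 ≤ E ≤ W + 1, the derivative of the final Prüfer angle satisfies φ'_{N+1}(E) ≤ (η(W)^{−N} − 1)/(η(W)^{−1} − 1). -/

import Mathlib

open Real Set Filter


/-- The quadratic form `q(x, φ) = 1 − 2x sin φ cos φ + x² sin² φ`. -/
noncomputable def qform (x φ : ℝ) : ℝ :=
  1 - 2 * x * Real.sin φ * Real.cos φ + x ^ 2 * Real.sin φ ^ 2

lemma qform_eq_sq (x φ : ℝ) :
    qform x φ = (Real.cos φ - x * Real.sin φ) ^ 2 + Real.sin φ ^ 2 := by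
  unfold qform
  linear_combination (-1 : ℝ) * (Real.sin_sq_add_cos_sq φ)

lemma qform_pos (x φ : ℝ) : 0 < qform x φ := by
  rcases eq_or_ne (Real.sin φ) 0 with h | h
  · simp [qform, h]
  · rw [qform_eq_sq]; positivity

lemma qform_nonneg (x φ : ℝ) : 0 ≤ qform x φ := (qform_pos x φ).le

/-- `η(W) = min { q(x, φ) : |x| ≤ W + 1, 0 ≤ φ ≤ π }`. -/
noncomputable def eta (W : ℝ) : ℝ :=
  sInf ((fun p : ℝ × ℝ => qform p.1 p.2) '' (Set.Icc (-(W + 1)) (W + 1) ×ˢ Set.Icc 0 Real.pi))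

lemma qform_continuous : Continuous fun p : ℝ × ℝ => qform p.1 p.2 := by
  unfold qform; fun_prop

lemma eta_bddBelow (W : ℝ) : BddBelow
    ((fun p : ℝ × ℝ => qform p.1 p.2) '' (Set.Icc (-(W + 1)) (W + 1) ×ˢ Set.Icc 0 Real.pi)) := by
  refine ⟨0, fun y hy => ?_⟩
  obtain ⟨p, -, rfl⟩ := hy
  exact qform_nonneg _ _

lemma eta_le_qform_aux (W : ℝ) {x φ : ℝ} (hx : x ∈ Set.Icc (-(W+1)) (W+1))
    (hφ : φ ∈ Set.Icc 0 Real.pi) : eta W ≤ qform x φ :=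
  csInf_le (eta_bddBelow W) ⟨(x, φ), Set.mk_mem_prod hx hφ, rfl⟩

lemma eta_pos (W : ℝ) (hW : 0 ≤ W) : 0 < eta W := by
  have hK : IsCompact (Set.Icc (-(W + 1)) (W + 1) ×ˢ Set.Icc 0 Real.pi) :=
    isCompact_Icc.prod isCompact_Icc
  have hne : (Set.Icc (-(W + 1)) (W + 1) ×ˢ Set.Icc 0 Real.pi).Nonempty := by
    refine ⟨(0, 0), Set.mk_mem_prod ?_ ?_⟩
    · constructor <;> linarith
    · exact ⟨le_refl 0, Real.pi_pos.le⟩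
  obtain ⟨p, -, hp⟩ := hK.exists_sInf_image_eq hne qform_continuous.continuousOn
  rw [eta, hp]
  exact qform_pos _ _

lemma eta_le_half (W : ℝ) (hW : 0 ≤ W) : eta W ≤ 1 / 2 := by
  have h : qform 1 (Real.pi / 4) = 1 / 2 := by
    rw [qform, Real.sin_pi_div_four, Real.cos_pi_div_four]
    rw [div_pow, Real.sq_sqrt (by norm_num : (0:ℝ) ≤ 2)]
    nlinarith [Real.sq_sqrt (by norm_num : (0:ℝ) ≤ 2), Real.sqrt_nonneg 2]
  calc eta W ≤ qform 1 (Real.pi / 4) := by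
        refine eta_le_qform_aux W ⟨by linarith, by linarith⟩
          ⟨by positivity, by linarith [Real.pi_pos]⟩
      _ = 1 / 2 := h

lemma cos_int_mul_pi_sq (k : ℤ) : Real.cos ((k : ℝ) * Real.pi) ^ 2 = 1 := by
  have h := Real.sin_sq_add_cos_sq ((k : ℝ) * Real.pi)
  rw [Real.sin_int_mul_pi] at h
  linarith [h]

lemma sin_shift (θ : ℝ) (k : ℤ) :
    Real.sin (θ + (k : ℝ) * Real.pi) = Real.sin θ * Real.cos ((k : ℝ) * Real.pi) := by
  rw [Real.sin_add, Real.sin_int_mul_pi]; ring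

lemma cos_shift (θ : ℝ) (k : ℤ) :
    Real.cos (θ + (k : ℝ) * Real.pi) = Real.cos θ * Real.cos ((k : ℝ) * Real.pi) := by
  rw [Real.cos_add, Real.sin_int_mul_pi]; ring

lemma qform_shift (x θ : ℝ) (k : ℤ) : qform x (θ + (k : ℝ) * Real.pi) = qform x θ := by
  have hu := cos_int_mul_pi_sq k
  rw [qform, qform, sin_shift, cos_shift]
  linear_combination (x ^ 2 * Real.sin θ ^ 2 - 2 * x * Real.sin θ * Real.cos θ) * hu

lemma eta_le_qform (W : ℝ) {x : ℝ} (φ : ℝ) (hx1 : -(W + 1) ≤ x) (hx2 : x ≤ W + 1) :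
    eta W ≤ qform x φ := by
  set k : ℤ := ⌊φ / Real.pi⌋ with hk
  set θ : ℝ := φ - (k : ℝ) * Real.pi with hθ
  have hφ : φ = θ + (k : ℝ) * Real.pi := by ring
  have h1 : 0 ≤ θ := by
    have := Int.sub_floor_div_mul_nonneg φ Real.pi_pos
    simpa [hθ, hk] using this
  have h2 : θ < Real.pi := by
    have := Int.sub_floor_div_mul_lt φ Real.pi_pos
    simpa [hθ, hk] using this
  calc eta W ≤ qform x θ := eta_le_qform_aux W ⟨hx1, hx2⟩ ⟨h1, h2.le⟩
    _ = qform x φ := by rw [hφ, qform_shift]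

lemma qform_factor_aux (x s c : ℝ) (hs : s ≠ 0) (hpy : s ^ 2 + c ^ 2 = 1) :
    1 - 2 * x * s * c + x ^ 2 * s ^ 2 = s ^ 2 * (1 + (x - c / s) ^ 2) := by
  field_simp
  linear_combination (-1 : ℝ) * hpy

lemma deriv_formula_aux (x s c d : ℝ) (hs : s ≠ 0) (hpy : s ^ 2 + c ^ 2 = 1) :
    1 / (1 + (x - c / s) ^ 2) * (1 - (-s * d * s - c * (c * d)) / s ^ 2)
      = 1 / (1 + (x - c / s) ^ 2) + d / (s ^ 2 * (1 + (x - c / s) ^ 2)) := by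
  have h1 : (0:ℝ) < 1 + (x - c / s) ^ 2 := by positivity
  have h2 : 1 - (-s * d * s - c * (c * d)) / s ^ 2 = 1 + d / s ^ 2 := by
    field_simp
    linear_combination d * hpy
  rw [h2]
  field_simp

/-- One step of the Prüfer angle recursion: if `φ = kπ` (i.e. `sin φ = 0`) the next
angle is `(k − 1/2)π = φ − π/2`; otherwise, with `k = ⌊φ/π⌋` the unique integer with
`kπ < φ < (k+1)π`, the next angle is `arctan(E − e − cot φ) + kπ`. -/
noncomputable def pruferStep (e E φ : ℝ) : ℝ :=
  if Real.sin φ = 0 then φ - Real.pi / 2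
  else Real.arctan (E - e - Real.cos φ / Real.sin φ) + Real.pi * ((⌊φ / Real.pi⌋ : ℤ) : ℝ)

lemma floor_div_pi_eq {t : ℝ} {k : ℤ} (h1 : (k : ℝ) * Real.pi ≤ t)
    (h2 : t < ((k : ℝ) + 1) * Real.pi) : ⌊t / Real.pi⌋ = k := by
  rw [Int.floor_eq_iff]
  constructor
  · rw [le_div_iff₀ Real.pi_pos]; exact h1
  · rw [div_lt_iff₀ Real.pi_pos]; push_cast; exact h2

lemma sin_ne_zero_of_Ioo {t : ℝ} {k : ℤ} (h1 : (k : ℝ) * Real.pi < t)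
    (h2 : t < ((k : ℝ) + 1) * Real.pi) : Real.sin t ≠ 0 := by
  intro h
  obtain ⟨m, hm⟩ := Real.sin_eq_zero_iff.1 h
  rw [← hm] at h1 h2
  have hk : (k : ℝ) < m := by
    have := (mul_lt_mul_iff_left₀ Real.pi_pos).1 h1
    exact_mod_cast this
  have hk' : (m : ℝ) < (k : ℝ) + 1 := (mul_lt_mul_iff_left₀ Real.pi_pos).1 h2
  have : (m : ℝ) < ((k + 1 : ℤ) : ℝ) := by push_cast; linarith
  have h4 : (k : ℤ) < m := by exact_mod_cast hk
  have h5 : (m : ℤ) < k + 1 := by exact_mod_cast this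
  omega

lemma pruferStep_eq_Ioo (e E φ : ℝ) (k : ℤ) (h1 : (k : ℝ) * Real.pi < φ)
    (h2 : φ < ((k : ℝ) + 1) * Real.pi) :
    pruferStep e E φ
      = Real.arctan (E - e - Real.cos φ / Real.sin φ) + Real.pi * (k : ℝ) := by
  rw [pruferStep, if_neg (sin_ne_zero_of_Ioo h1 h2), floor_div_pi_eq h1.le h2]

lemma pruferStep_eq_near (e E φ : ℝ) (k : ℤ)
    (h1 : |φ - (k : ℝ) * Real.pi| < Real.pi / 2)
    (h2 : ((E - e) * Real.sin φ - Real.cos φ) * Real.cos ((k : ℝ) * Real.pi) < 0) :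
    pruferStep e E φ = (k : ℝ) * Real.pi - Real.pi / 2
      - Real.arctan (Real.sin φ / ((E - e) * Real.sin φ - Real.cos φ)) := by
  set θ : ℝ := φ - (k : ℝ) * Real.pi with hθdef
  have hφ : φ = θ + (k : ℝ) * Real.pi := by ring
  have hθ1 : -(Real.pi / 2) < θ := by have := abs_lt.1 h1; linarith [this.1]
  have hθ2 : θ < Real.pi / 2 := (abs_lt.1 h1).2
  have hpi := Real.pi_pos
  set u : ℝ := Real.cos ((k : ℝ) * Real.pi) with hu
  have hu2 : u ^ 2 = 1 := cos_int_mul_pi_sq k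
  have hune : u ≠ 0 := by intro h; rw [h] at hu2; norm_num at hu2
  have hs : Real.sin φ = Real.sin θ * u := by rw [hφ, sin_shift]
  have hc : Real.cos φ = Real.cos θ * u := by rw [hφ, cos_shift]
  -- rewrite the hypothesis h2
  have hA : (E - e) * Real.sin θ - Real.cos θ < 0 := by
    rw [hs, hc] at h2
    nlinarith [h2, hu2]
  have hD : (E - e) * Real.sin φ - Real.cos φ = ((E - e) * Real.sin θ - Real.cos θ) * u := by
    rw [hs, hc]; ring
  rcases lt_trichotomy θ 0 with hneg | hzero | hpos
  · -- θ < 0 : φ ∈ ((k-1)π, kπ)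
    have hsθ : Real.sin θ < 0 := Real.sin_neg_of_neg_of_neg_pi_lt hneg (by linarith)
    have hlo : ((k - 1 : ℤ) : ℝ) * Real.pi < φ := by push_cast; rw [hφ]; nlinarith
    have hhi : φ < (((k - 1 : ℤ) : ℝ) + 1) * Real.pi := by push_cast; rw [hφ]; nlinarith
    rw [pruferStep_eq_Ioo e E φ (k - 1) hlo hhi]
    have hcd : Real.cos φ / Real.sin φ = Real.cos θ / Real.sin θ := by
      rw [hs, hc, mul_div_mul_right _ _ hune]
    set t : ℝ := E - e - Real.cos θ / Real.sin θ with ht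
    have htval : t = ((E - e) * Real.sin θ - Real.cos θ) / Real.sin θ := by
      rw [ht]; field_simp [hsθ.ne]
    have htpos : 0 < t := by
      rw [htval]; exact div_pos_of_neg_of_neg hA hsθ
    have hinv : t⁻¹ = Real.sin φ / ((E - e) * Real.sin φ - Real.cos φ) := by
      rw [htval, ← one_div, one_div_div, hD, hs]
      rw [mul_comm (Real.sin θ) u, mul_comm _ u, mul_div_mul_left _ _ hune]
    have harc : Real.arctan t = Real.pi / 2 - Real.arctan t⁻¹ := by
      linarith [Real.arctan_inv_of_pos htpos]
    rw [hcd, harc, hinv]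
    push_cast
    ring
  · -- θ = 0 : sin φ = 0
    have hsφ : Real.sin φ = 0 := by rw [hs, hzero]; simp
    rw [pruferStep, if_pos hsφ, hsφ, zero_div, Real.arctan_zero, hφ, hzero]
    ring
  · -- θ > 0 : φ ∈ (kπ, (k+1)π)
    have hsθ : 0 < Real.sin θ := Real.sin_pos_of_pos_of_lt_pi hpos (by linarith)
    have hlo : (k : ℝ) * Real.pi < φ := by rw [hφ]; linarith
    have hhi : φ < ((k : ℝ) + 1) * Real.pi := by rw [hφ]; nlinarith
    rw [pruferStep_eq_Ioo e E φ k hlo hhi]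
    have hcd : Real.cos φ / Real.sin φ = Real.cos θ / Real.sin θ := by
      rw [hs, hc, mul_div_mul_right _ _ hune]
    set t : ℝ := E - e - Real.cos θ / Real.sin θ with ht
    have htval : t = ((E - e) * Real.sin θ - Real.cos θ) / Real.sin θ := by
      rw [ht]; field_simp [hsθ.ne']
    have htneg : t < 0 := by
      rw [htval]; exact div_neg_of_neg_of_pos hA hsθ
    have hinv : t⁻¹ = Real.sin φ / ((E - e) * Real.sin φ - Real.cos φ) := by
      rw [htval, ← one_div, one_div_div, hD, hs]
      rw [mul_comm (Real.sin θ) u, mul_comm _ u, mul_div_mul_left _ _ hune]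
    have harc : Real.arctan t = -(Real.pi / 2) - Real.arctan t⁻¹ := by
      linarith [Real.arctan_inv_of_neg htneg]
    rw [hcd, harc, hinv]
    ring

/-- The Prüfer angles: `φ_1(E) = π/2` and `φ_{n+1}(E) = pruferStep (ε n) E (φ_n(E))`
for `n ≥ 1`.  (The value at index `0` is junk, set to `π/2`.) -/
noncomputable def prufer (ε : ℕ → ℝ) (E : ℝ) : ℕ → ℝ
  | 0 => Real.pi / 2
  | 1 => Real.pi / 2
  | n + 2 => pruferStep (ε (n + 1)) E (prufer ε E (n + 1))

lemma prufer_succ (ε : ℕ → ℝ) (E : ℝ) (n : ℕ) (hn : 1 ≤ n) :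
    prufer ε E (n + 1) = pruferStep (ε n) E (prufer ε E n) := by
  obtain ⟨m, rfl⟩ : ∃ m, n = m + 1 := ⟨n - 1, by omega⟩
  rfl

lemma prufer_hasDerivAt_bound (W : ℝ) (hW : 0 ≤ W) (N : ℕ) (ε : ℕ → ℝ)
    (hε : ∀ n, 1 ≤ n → n ≤ N → ε n ∈ Set.Icc 0 W) :
    ∀ n, 1 ≤ n → n ≤ N + 1 → ∀ E ∈ Set.Icc (-1 : ℝ) (W + 1),
      ∃ d, HasDerivAt (fun E' : ℝ => prufer ε E' n) d E ∧ 0 ≤ d ∧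
        d ≤ ∑ j ∈ Finset.range (n - 1), (eta W)⁻¹ ^ j := by
  intro n hn
  induction n, hn using Nat.le_induction with
  | base =>
    intro _ E _
    exact ⟨0, hasDerivAt_const E (Real.pi / 2), le_refl 0, by simp⟩
  | succ n hn ih =>
    intro hn1 E hE
    obtain ⟨d, hd, hd0, hdle⟩ := ih (by omega) E hE
    have hεn := hε n hn (by omega)
    have hη : 0 < eta W := eta_pos W hW
    have hηi : (0:ℝ) ≤ (eta W)⁻¹ := by positivity
    set e := ε n with hedef
    set ψ : ℝ → ℝ := fun E' => prufer ε E' n with hψdef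
    set φ := ψ E with hφdef
    have hrec : ∀ E', prufer ε E' (n + 1) = pruferStep e E' (ψ E') := fun E' =>
      prufer_succ ε E' n hn
    have hx1 : -(W + 1) ≤ E - e := by
      obtain ⟨h1, h2⟩ := hE; obtain ⟨h3, h4⟩ := hεn; simp only [hedef]; linarith
    have hx2 : E - e ≤ W + 1 := by
      obtain ⟨h1, h2⟩ := hE; obtain ⟨h3, h4⟩ := hεn; simp only [hedef]; linarith
    have hsum : ∑ j ∈ Finset.range ((n + 1) - 1), (eta W)⁻¹ ^ j
        = 1 + (eta W)⁻¹ * ∑ j ∈ Finset.range (n - 1), (eta W)⁻¹ ^ j := by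
      obtain ⟨m, rfl⟩ : ∃ m, n = m + 1 := ⟨n - 1, by omega⟩
      simp only [Nat.add_sub_cancel, geom_sum_succ]
      ring
    have hcont : ContinuousAt ψ E := hd.continuousAt
    rcases eq_or_ne (Real.sin φ) 0 with hsφ | hsφ
    · -- Case B : sin φ = 0
      obtain ⟨k, hkφ⟩ := Real.sin_eq_zero_iff.1 hsφ
      have hcφ : Real.cos φ ≠ 0 := by
        intro h
        have := Real.sin_sq_add_cos_sq φ
        rw [hsφ, h] at this; norm_num at this
      have hc1 : ∀ᶠ E' in nhds E, |ψ E' - (k : ℝ) * Real.pi| < Real.pi / 2 := by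
        have hca : ContinuousAt (fun E' => |ψ E' - (k : ℝ) * Real.pi|) E :=
          (hcont.sub continuousAt_const).abs
        have h0 : |ψ E - (k : ℝ) * Real.pi| < Real.pi / 2 := by
          rw [← hφdef, ← hkφ]; simpa using by positivity
        exact hca.eventually_lt_const h0
      have hc2 : ∀ᶠ E' in nhds E,
          ((E' - e) * Real.sin (ψ E') - Real.cos (ψ E')) * Real.cos ((k : ℝ) * Real.pi) < 0 := by
        have hca : ContinuousAt (fun E' =>
            ((E' - e) * Real.sin (ψ E') - Real.cos (ψ E')) * Real.cos ((k : ℝ) * Real.pi)) E := by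
          exact (((continuousAt_id.sub continuousAt_const).mul
            (Real.continuous_sin.continuousAt.comp hcont)).sub
            (Real.continuous_cos.continuousAt.comp hcont)).mul continuousAt_const
        have h0 : ((E - e) * Real.sin (ψ E) - Real.cos (ψ E)) * Real.cos ((k : ℝ) * Real.pi) < 0 := by
          rw [← hφdef, hsφ, hkφ]
          have : (0:ℝ) < Real.cos φ * Real.cos φ := by
            rcases hcφ.lt_or_gt with h | h
            · exact mul_pos_of_neg_of_neg h h
            · exact mul_pos h h
          nlinarith
        exact hca.eventually_lt_const h0
      have heq : (fun E' : ℝ => prufer ε E' (n + 1)) =ᶠ[nhds E]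
          (fun E' => (k : ℝ) * Real.pi - Real.pi / 2
            - Real.arctan (Real.sin (ψ E') / ((E' - e) * Real.sin (ψ E') - Real.cos (ψ E')))) := by
        filter_upwards [hc1, hc2] with E' h1' h2'
        rw [hrec E', pruferStep_eq_near e E' (ψ E') k h1' h2']
      have hsinD : HasDerivAt (fun E' => Real.sin (ψ E')) (Real.cos φ * d) E :=
        by have := (Real.hasDerivAt_sin φ).comp E hd; exact this
      have hcosD : HasDerivAt (fun E' => Real.cos (ψ E')) (-Real.sin φ * d) E :=
        by have := (Real.hasDerivAt_cos φ).comp E hd; exact this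
      have hD : HasDerivAt (fun E' => (E' - e) * Real.sin (ψ E') - Real.cos (ψ E'))
          ((1 * Real.sin φ + (E - e) * (Real.cos φ * d)) - (-Real.sin φ * d)) E :=
        (((hasDerivAt_id E).sub_const e).mul hsinD).sub hcosD
      have hDne : (E - e) * Real.sin φ - Real.cos φ ≠ 0 := by
        rw [hsφ]; simpa using hcφ
      have hG := hsinD.div hD hDne
      have harc := (Real.hasDerivAt_arctan
        (Real.sin φ / ((E - e) * Real.sin φ - Real.cos φ))).comp E hG
      have hfun := harc.const_sub ((k : ℝ) * Real.pi - Real.pi / 2)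
      have hval : -(1 / (1 + (Real.sin φ / ((E - e) * Real.sin φ - Real.cos φ)) ^ 2) *
          ((Real.cos φ * d * ((E - e) * Real.sin φ - Real.cos φ) -
            Real.sin φ * ((1 * Real.sin φ + (E - e) * (Real.cos φ * d)) - -Real.sin φ * d)) /
            ((E - e) * Real.sin φ - Real.cos φ) ^ 2)) = d := by
        rw [hsφ]; field_simp; rw [div_eq_mul_inv, neg_mul_eq_neg_mul, ← mul_inv_cancel₀ (pow_ne_zero 2 hcφ)]; ring
      have hfinal : HasDerivAt (fun E' : ℝ => prufer ε E' (n + 1)) d E := by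
        rw [← hval]
        exact hfun.congr_of_eventuallyEq heq
      refine ⟨d, hfinal, hd0, ?_⟩
      rw [hsum]
      have hS : (0:ℝ) ≤ ∑ j ∈ Finset.range (n - 1), (eta W)⁻¹ ^ j :=
        Finset.sum_nonneg fun j _ => pow_nonneg hηi j
      have hη1 : (1:ℝ) < (eta W)⁻¹ := (one_lt_inv₀ hη).mpr (by linarith [eta_le_half W hW])
      nlinarith [mul_nonneg (sub_nonneg.mpr hη1.le) hS]
    · -- Case A : sin φ ≠ 0
      set k : ℤ := ⌊φ / Real.pi⌋ with hk
      have hlo : (k : ℝ) * Real.pi ≤ φ := by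
        rw [← le_div_iff₀ Real.pi_pos]; exact Int.floor_le _
      have hlo' : (k : ℝ) * Real.pi < φ :=
        lt_of_le_of_ne hlo (fun h => hsφ (h ▸ Real.sin_int_mul_pi k))
      have hhi : φ < ((k : ℝ) + 1) * Real.pi := by
        rw [← div_lt_iff₀ Real.pi_pos]
        exact_mod_cast Int.lt_floor_add_one (φ / Real.pi)
      have hmem : ∀ᶠ E' in nhds E,
          ψ E' ∈ Set.Ioo ((k : ℝ) * Real.pi) (((k : ℝ) + 1) * Real.pi) :=
        hcont.eventually_mem (isOpen_Ioo.mem_nhds ⟨hlo', hhi⟩)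
      have heq : (fun E' : ℝ => prufer ε E' (n + 1)) =ᶠ[nhds E]
          (fun E' => Real.arctan (E' - e - Real.cos (ψ E') / Real.sin (ψ E'))
            + Real.pi * (k : ℝ)) := by
        filter_upwards [hmem] with E' hE'
        rw [hrec E', pruferStep_eq_Ioo e E' (ψ E') k hE'.1 hE'.2]
      have hcosD : HasDerivAt (fun E' => Real.cos (ψ E')) (-Real.sin φ * d) E :=
        by have := (Real.hasDerivAt_cos φ).comp E hd; exact this
      have hsinD : HasDerivAt (fun E' => Real.sin (ψ E')) (Real.cos φ * d) E :=
        by have := (Real.hasDerivAt_sin φ).comp E hd; exact this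
      have hquot := hcosD.div hsinD hsφ
      have hinner : HasDerivAt (fun E' => E' - e - Real.cos (ψ E') / Real.sin (ψ E'))
          (1 - (-Real.sin φ * d * Real.sin φ - Real.cos φ * (Real.cos φ * d))
            / Real.sin φ ^ 2) E :=
        ((hasDerivAt_id E).sub_const e).sub hquot
      set u : ℝ := E - e - Real.cos φ / Real.sin φ with hu
      have harc := (Real.hasDerivAt_arctan u).comp E hinner
      have hfun := harc.add_const (Real.pi * (k : ℝ))
      set q : ℝ := qform (E - e) φ with hqdef
      have hqpos : 0 < q := qform_pos _ _
      have hqs : q = Real.sin φ ^ 2 * (1 + u ^ 2) := by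
        rw [hqdef, qform, hu]
        exact qform_factor_aux (E - e) _ _ hsφ (Real.sin_sq_add_cos_sq φ)
      have h1u : (0:ℝ) < 1 + u ^ 2 := by positivity
      have hval : 1 / (1 + u ^ 2) *
          (1 - (-Real.sin φ * d * Real.sin φ - Real.cos φ * (Real.cos φ * d))
            / Real.sin φ ^ 2) = 1 / (1 + u ^ 2) + d / q := by
        rw [hqs, hu]
        exact deriv_formula_aux (E - e) _ _ d hsφ (Real.sin_sq_add_cos_sq φ)
      have hfinal : HasDerivAt (fun E' : ℝ => prufer ε E' (n + 1))
          (1 / (1 + u ^ 2) + d / q) E := by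
        rw [← hval]
        exact hfun.congr_of_eventuallyEq heq
      refine ⟨_, hfinal, ?_, ?_⟩
      · have := div_nonneg hd0 hqpos.le
        positivity
      · rw [hsum]
        have ht1 : 1 / (1 + u ^ 2) ≤ 1 := by
          rw [div_le_one h1u]; nlinarith [sq_nonneg u]
        have hqeta : eta W ≤ q := eta_le_qform W φ hx1 hx2
        have ht2 : d / q ≤ d / eta W := by
          apply div_le_div_of_nonneg_left hd0 hη hqeta
        have ht3 : d / eta W = (eta W)⁻¹ * d := by rw [div_eq_inv_mul]
        have ht4 : (eta W)⁻¹ * d ≤ (eta W)⁻¹ * ∑ j ∈ Finset.range (n - 1), (eta W)⁻¹ ^ j :=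
          mul_le_mul_of_nonneg_left hdle hηi
        linarith

/-- **Exponential bound on the rotation speed**: for every `E ∈ [−1, W + 1]`,
`φ'_{N+1}(E) ≤ (η(W)⁻ᴺ − 1)/(η(W)⁻¹ − 1)`. -/
theorem prufer_deriv_exponential_bound
    (N : ℕ) (hN : 1 ≤ N) (W : ℝ) (hW : 0 ≤ W)
    (ε : ℕ → ℝ) (hε : ∀ n, 1 ≤ n → n ≤ N → ε n ∈ Set.Icc 0 W) :
    ∀ E ∈ Set.Icc (-1 : ℝ) (W + 1),
      deriv (fun E' : ℝ => prufer ε E' (N + 1)) E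
        ≤ ((eta W)⁻¹ ^ N - 1) / ((eta W)⁻¹ - 1) := by
  intro E hE
  obtain ⟨d, hd, hd0, hdle⟩ :=
    prufer_hasDerivAt_bound W hW N ε hε (N + 1) (by omega) le_rfl E hE
  rw [hd.deriv]
  have hη : 0 < eta W := eta_pos W hW
  have hne : (eta W)⁻¹ ≠ 1 :=
    ne_of_gt ((one_lt_inv₀ hη).mpr (by linarith [eta_le_half W hW]))
  calc d ≤ ∑ j ∈ Finset.range N, (eta W)⁻¹ ^ j := by simpa using hdle
    _ = ((eta W)⁻¹ ^ N - 1) / ((eta W)⁻¹ - 1) := geom_sum_eq hne N
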